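/- Let E be a finite extension of ℚ_p and α ∈ E with v_p(α) ≠ 0. Then the operator ψ − α is surjective on the p-adic completion D of E ⊗ (ℤ_p[[X]][1/X])^ (more generally on any E-Banach module D with a continuous operator ψ preserving a bounded O_E-lattice D⁰ with ψ(D⁰) ⊆ D⁰, and admitting a right inverse φ with ψφ = id, φ(D⁰) ⊆ D⁰): (a) if v_p(α) < 0 the series −α^{-1}(1 + α^{-1}ψ + (α^{-1}ψ)² + ⋯) converges and inverts ψ − α; (b) if v_p(α) > 0 then for every x, writing φ(x) = (1 − αφ)y with y = (1−αφ)^{-1}φ(x), one has x = (ψ − α)(y); hence ψ − α is surjective in both cases. -/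

import Mathlib

lemma aux_summable {D : Type*} [NormedAddCommGroup D] [CompleteSpace D]
    (r C : ℝ) (hr0 : 0 ≤ r) (hr : r < 1) (f : ℕ → D)
    (hf : ∀ n, ‖f n‖ ≤ r ^ n * C) : Summable f :=
  Summable.of_norm_bounded ((summable_geometric_of_lt_one hr0 hr).mul_right C) hf

lemma aux_shift {D : Type*} [NormedAddCommGroup D] {f : ℕ → D} {S : D}
    (h : HasSum f S) : HasSum (fun n => f (n + 1)) (S - f 0) := by
  refine (hasSum_nat_add_iff 1).mpr ?_
  simpa using h

/-- Let `D` be an `E`-Banach space with continuous operators `ψ, φ` such that `ψ ∘ φ = id`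
and both preserve (up to a uniform constant) a bounded lattice, i.e. are power-bounded.
For `α ∈ E` with `v_p(α) ≠ 0` (i.e. `‖α‖ ≠ 1`), `ψ - α` is surjective on `D`:
(a) if `v_p(α) < 0` (`‖α‖ > 1`), the geometric series `-α⁻¹ ∑ (α⁻¹ψ)^n x` converges to a
preimage of `x`; (b) if `v_p(α) > 0` (`‖α‖ < 1`), the series `y = ∑ αⁿ φ^{n+1} x`
(i.e. `y = (1 - αφ)⁻¹ φ(x)`) converges and `(ψ - α)(y) = x`. Hence `ψ - α` is surjective
in both cases. -/
theorem psi_sub_alpha_surjective {p : ℕ} [Fact p.Prime]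
    {E : Type*} [NontriviallyNormedField E]
    {D : Type*} [NormedAddCommGroup D] [NormedSpace E D] [CompleteSpace D]
    (ψ φ : D →L[E] D) (hcomp : ∀ x : D, ψ (φ x) = x)
    (Cb : ℝ) (hCb : 0 ≤ Cb)
    (hψb : ∀ (n : ℕ) (x : D), ‖(ψ ^ n) x‖ ≤ Cb * ‖x‖)
    (hφb : ∀ (n : ℕ) (x : D), ‖(φ ^ n) x‖ ≤ Cb * ‖x‖)
    (α : E) (hα0 : α ≠ 0) (hα1 : ‖α‖ ≠ 1) :
    -- (a) `v_p(α) < 0`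
    (1 < ‖α‖ → ∀ x : D, ∃ y : D,
      HasSum (fun n : ℕ => -(α⁻¹ ^ (n + 1) • (ψ ^ n) x)) y ∧ ψ y - α • y = x) ∧
    -- (b) `v_p(α) > 0`
    (‖α‖ < 1 → ∀ x : D, ∃ y : D,
      HasSum (fun n : ℕ => α ^ n • (φ ^ (n + 1)) x) y ∧ ψ y - α • y = x) ∧
    -- hence surjectivity
    Function.Surjective (fun x : D => ψ x - α • x) := by
  have partA : 1 < ‖α‖ → ∀ x : D, ∃ y : D,
      HasSum (fun n : ℕ => -(α⁻¹ ^ (n + 1) • (ψ ^ n) x)) y ∧ ψ y - α • y = x := by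
    intro hα x
    set b : ℕ → D := fun n => -(α⁻¹ ^ (n + 1) • (ψ ^ n) x) with hb
    have hr0 : (0:ℝ) ≤ ‖α⁻¹‖ := norm_nonneg _
    have hr1 : ‖α⁻¹‖ < 1 := by
      rw [norm_inv]
      exact inv_lt_one_of_one_lt₀ hα
    have hsum : Summable b := by
      refine aux_summable ‖α⁻¹‖ (Cb * ‖x‖) hr0 hr1 b (fun n => ?_)
      have h1 : ‖b n‖ = ‖α⁻¹‖ ^ (n + 1) * ‖(ψ ^ n) x‖ := by
        simp [hb, norm_smul, norm_pow]
      rw [h1]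
      calc ‖α⁻¹‖ ^ (n + 1) * ‖(ψ ^ n) x‖
          ≤ ‖α⁻¹‖ ^ n * ‖(ψ ^ n) x‖ := by
            apply mul_le_mul_of_nonneg_right _ (norm_nonneg _)
            exact pow_le_pow_of_le_one hr0 hr1.le (Nat.le_succ n)
        _ ≤ ‖α⁻¹‖ ^ n * (Cb * ‖x‖) := by
            exact mul_le_mul_of_nonneg_left (hψb n x) (pow_nonneg hr0 n)
    obtain ⟨y, hy⟩ := hsum
    refine ⟨y, hy, ?_⟩
    -- ψ y = α • (y - b 0)
    have hψy : HasSum (fun n => ψ (b n)) (ψ y) := ψ.hasSum hy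
    have heq : (fun n => ψ (b n)) = fun n => α • b (n + 1) := by
      funext n
      simp only [hb, map_neg, map_smul, smul_neg, smul_smul]
      congr 1
      rw [show α * α⁻¹ ^ (n + 1 + 1) = α⁻¹ ^ (n + 1) by
        rw [pow_succ', ← mul_assoc, mul_inv_cancel₀ hα0, one_mul]]
      congr 1
      rw [pow_succ' ψ n]
      simp [ContinuousLinearMap.mul_apply]
    have hshift : HasSum (fun n => α • b (n + 1)) (α • (y - b 0)) :=
      (aux_shift hy).const_smul α
    rw [heq] at hψy
    have hψy' : ψ y = α • (y - b 0) := hψy.unique hshift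
    have hb0 : b 0 = -(α⁻¹ • x) := by simp [hb]
    rw [hψy', hb0]
    rw [smul_sub, smul_neg, smul_smul, mul_inv_cancel₀ hα0]
    simp
  have partB : ‖α‖ < 1 → ∀ x : D, ∃ y : D,
      HasSum (fun n : ℕ => α ^ n • (φ ^ (n + 1)) x) y ∧ ψ y - α • y = x := by
    intro hα x
    set b : ℕ → D := fun n => α ^ n • (φ ^ (n + 1)) x with hb
    set c : ℕ → D := fun n => α ^ n • (φ ^ n) x with hc
    have hr0 : (0:ℝ) ≤ ‖α‖ := norm_nonneg _
    have hbound : ∀ (f : ℕ → D), (∀ n, ‖f n‖ ≤ ‖α‖ ^ n * (Cb * ‖x‖)) → Summable f :=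
      fun f hf => aux_summable ‖α‖ (Cb * ‖x‖) hr0 hα f hf
    have hsumb : Summable b := by
      refine hbound b (fun n => ?_)
      have : ‖b n‖ = ‖α‖ ^ n * ‖(φ ^ (n+1)) x‖ := by simp [hb, norm_smul, norm_pow]
      rw [this]
      exact mul_le_mul_of_nonneg_left (hφb (n+1) x) (pow_nonneg hr0 n)
    have hsumc : Summable c := by
      refine hbound c (fun n => ?_)
      have : ‖c n‖ = ‖α‖ ^ n * ‖(φ ^ n) x‖ := by simp [hc, norm_smul, norm_pow]
      rw [this]
      exact mul_le_mul_of_nonneg_left (hφb n x) (pow_nonneg hr0 n)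
    obtain ⟨y, hy⟩ := hsumb
    obtain ⟨S, hS⟩ := hsumc
    refine ⟨y, hy, ?_⟩
    -- ψ y = S
    have hψy : HasSum (fun n => ψ (b n)) (ψ y) := ψ.hasSum hy
    have heq1 : (fun n => ψ (b n)) = c := by
      funext n
      simp only [hb, hc, map_smul]
      congr 1
      rw [pow_succ' φ]
      simp [ContinuousLinearMap.mul_apply, hcomp]
    rw [heq1] at hψy
    have hψyS : ψ y = S := hψy.unique hS
    -- α • y = S - c 0
    have hαy : HasSum (fun n => α • b n) (α • y) := hy.const_smul α
    have heq2 : (fun n => α • b n) = fun n => c (n + 1) := by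
      funext n
      simp only [hb, hc, smul_smul, pow_succ']
    rw [heq2] at hαy
    have hαy' : α • y = S - c 0 := hαy.unique (aux_shift hS)
    have hc0 : c 0 = x := by simp [hc]
    rw [hψyS, hαy', hc0]
    abel
  refine ⟨partA, partB, ?_⟩
  intro x
  rcases lt_or_gt_of_ne hα1 with h | h
  · obtain ⟨y, _, hy⟩ := partB h x
    exact ⟨y, hy⟩
  · obtain ⟨y, _, hy⟩ := partA h x
    exact ⟨y, hy⟩
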